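/- arXiv:1703.05049 — 3 statements merged into one kernel-verified Lean document; each statement's English description precedes it below -/
import Mathlib

section
/- There exists a constant c > 0 such that for all x ≥ 0, Σ_{n≥0} (1/(n+1)^{3/2}) (1 − e^{−x(n+1)}) ≤ c √x. -/
set_option maxHeartbeats 1000000

private lemma rpow_32 (t : ℝ) (ht : 0 < t) : t ^ ((3:ℝ)/2) = t * Real.sqrt t := by
  rw [show (3:ℝ)/2 = 1 + 1/2 by norm_num, Real.rpow_add ht, Real.rpow_one, Real.sqrt_eq_rpow]

private lemma maj_summable : Summable (fun n : ℕ => 1 / ((n:ℝ)+1) ^ ((3:ℝ)/2)) := by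
  have h := Real.summable_one_div_nat_rpow.2 (show (1:ℝ) < 3/2 by norm_num)
  have h2 := (summable_nat_add_iff 1).2 h
  simpa using h2

private lemma head_bound (N : ℕ) :
    ∑ n ∈ Finset.range N, 1 / Real.sqrt ((n:ℝ)+1) ≤ 2 * Real.sqrt N := by
  induction N with
  | zero => simp
  | succ N ih =>
    rw [Finset.sum_range_succ]
    have hN : (0:ℝ) ≤ N := Nat.cast_nonneg N
    have ha := Real.sqrt_nonneg (N:ℝ)
    have hb : 0 < Real.sqrt ((N:ℝ)+1) := Real.sqrt_pos.2 (by positivity)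
    have ha2 : Real.sqrt (N:ℝ) ^ 2 = N := Real.sq_sqrt hN
    have hb2 : Real.sqrt ((N:ℝ)+1) ^ 2 = (N:ℝ)+1 := Real.sq_sqrt (by positivity)
    have hab : Real.sqrt (N:ℝ) ≤ Real.sqrt ((N:ℝ)+1) := Real.sqrt_le_sqrt (by linarith)
    have key : 1 / Real.sqrt ((N:ℝ)+1) ≤ 2 * Real.sqrt ((N:ℝ)+1) - 2 * Real.sqrt (N:ℝ) := by
      rw [div_le_iff₀ hb]
      nlinarith [sq_nonneg (Real.sqrt ((N:ℝ)+1) - Real.sqrt (N:ℝ))]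
    have hcast : ((N+1:ℕ):ℝ) = (N:ℝ)+1 := by push_cast; ring
    rw [hcast]
    linarith

private lemma tail_bound (N : ℕ) (hN : 1 ≤ N) :
    ∑' j : ℕ, 1 / (((j + N : ℕ):ℝ) + 1) ^ ((3:ℝ)/2) ≤ 2 / Real.sqrt N := by
  have hsum : Summable (fun j : ℕ => 1 / (((j + N : ℕ):ℝ) + 1) ^ ((3:ℝ)/2)) :=
    (summable_nat_add_iff N).2 maj_summable
  apply Summable.tsum_le_of_sum_range_le hsum
  intro M
  set b : ℕ → ℝ := fun j => 2 / Real.sqrt ((j:ℝ) + N) with hbdef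
  have key : ∀ j : ℕ, 1 / (((j + N : ℕ):ℝ) + 1) ^ ((3:ℝ)/2) ≤ b j - b (j+1) := by
    intro j
    have hN1 : (1:ℝ) ≤ (N:ℝ) := by exact_mod_cast hN
    have hj : (0:ℝ) ≤ j := Nat.cast_nonneg j
    set s := Real.sqrt ((j:ℝ) + N) with hs'
    set t := Real.sqrt ((j:ℝ) + N + 1) with ht'
    have hs : 0 < s := Real.sqrt_pos.2 (by linarith)
    have ht : 0 < t := Real.sqrt_pos.2 (by linarith)
    have hs2 : s ^ 2 = (j:ℝ) + N := Real.sq_sqrt (by linarith)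
    have ht2 : t ^ 2 = (j:ℝ) + N + 1 := Real.sq_sqrt (by linarith)
    have hst : s ≤ t := Real.sqrt_le_sqrt (by linarith)
    have hb1 : b (j+1) = 2 / t := by
      have harg : (((j+1:ℕ)):ℝ) + N = (j:ℝ) + N + 1 := by push_cast; ring
      simp only [hbdef, harg, ht']
    have heq : (((j + N : ℕ):ℝ) + 1) ^ ((3:ℝ)/2) = t ^ 2 * t := by
      have harg : (((j + N : ℕ):ℝ) + 1) = (j:ℝ) + N + 1 := by push_cast; ring
      rw [harg, rpow_32 _ (by linarith), ht2, ← ht']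
    rw [heq, hb1]
    show 1 / (t^2 * t) ≤ 2 / s - 2 / t
    rw [div_sub_div _ _ hs.ne' ht.ne', div_le_div_iff₀ (by positivity) (by positivity)]
    have h1 : t^2 - s^2 = 1 := by rw [ht2, hs2]; ring
    have h2 : s*t*(t+s) ≤ 2*(t^2*t) := by
      nlinarith [mul_le_mul_of_nonneg_right hst (sq_nonneg t),
        mul_le_mul_of_nonneg_right (mul_self_le_mul_self hs.le hst) ht.le]
    have h3 : (2*t-2*s)*(t^2*t)*(t+s) = 2*(t^2*t) := by linear_combination (2*t^2*t) * h1
    have h4 : s*t*(t+s) ≤ (2*t-2*s)*(t^2*t)*(t+s) := by linarith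
    have h5 := le_of_mul_le_mul_right h4 (by positivity : (0:ℝ) < t+s)
    linarith
  calc ∑ j ∈ Finset.range M, 1 / (((j + N : ℕ):ℝ) + 1) ^ ((3:ℝ)/2)
      ≤ ∑ j ∈ Finset.range M, (b j - b (j+1)) :=
        Finset.sum_le_sum fun j _ => key j
    _ = b 0 - b M := Finset.sum_range_sub' b M
    _ ≤ b 0 := by
        have : 0 ≤ b M := by positivity
        linarith
    _ = 2 / Real.sqrt N := by simp [hbdef]

/-- There is `c > 0` such that `Σ_{n≥0} (n+1)^{-3/2} (1 − e^{−x(n+1)}) ≤ c √x` for all `x ≥ 0`. -/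
theorem sum_one_sub_exp_le_sqrt :
    ∃ c : ℝ, 0 < c ∧ ∀ x : ℝ, 0 ≤ x →
      (∑' n : ℕ, (1 / ((n : ℝ) + 1) ^ ((3:ℝ) / 2)) * (1 - Real.exp (-x * ((n : ℝ) + 1))))
        ≤ c * Real.sqrt x := by
  refine ⟨5, by norm_num, fun x hx => ?_⟩
  set f : ℕ → ℝ := fun n => (1 / ((n : ℝ) + 1) ^ ((3:ℝ) / 2)) * (1 - Real.exp (-x * ((n : ℝ) + 1))) with hfdef
  have hexple : ∀ n : ℕ, Real.exp (-x * ((n:ℝ)+1)) ≤ 1 := by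
    intro n
    rw [Real.exp_le_one_iff]
    have : (0:ℝ) ≤ (n:ℝ)+1 := by positivity
    nlinarith
  have hf0 : ∀ n, 0 ≤ f n := by
    intro n
    apply mul_nonneg (by positivity)
    linarith [hexple n]
  have hfle : ∀ n, f n ≤ 1 / ((n:ℝ)+1) ^ ((3:ℝ)/2) := by
    intro n
    have h1 : 1 - Real.exp (-x * ((n:ℝ)+1)) ≤ 1 := by
      have := Real.exp_pos (-x * ((n:ℝ)+1)); linarith
    calc f n ≤ (1 / ((n:ℝ)+1) ^ ((3:ℝ)/2)) * 1 :=
          mul_le_mul_of_nonneg_left h1 (by positivity)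
      _ = 1 / ((n:ℝ)+1) ^ ((3:ℝ)/2) := mul_one _
  have hfsum : Summable f := maj_summable.of_nonneg_of_le hf0 hfle
  rcases eq_or_lt_of_le hx with rfl | hxpos
  · simp [hfdef]
  · set N : ℕ := ⌈1/x⌉₊ with hNdef
    have hNpos : 0 < N := Nat.ceil_pos.2 (by positivity)
    have hN1 : (1:ℝ) ≤ N := by exact_mod_cast hNpos
    have hNge : 1/x ≤ (N:ℝ) := Nat.le_ceil _
    have hsx : 0 < Real.sqrt x := Real.sqrt_pos.2 hxpos
    have hsx2 : Real.sqrt x ^ 2 = x := Real.sq_sqrt hx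
    -- tail bound
    have htail : ∑' j : ℕ, f (j + N) ≤ 2 * Real.sqrt x := by
      have h1 : ∑' j : ℕ, f (j + N) ≤ ∑' j : ℕ, 1 / (((j + N : ℕ):ℝ) + 1) ^ ((3:ℝ)/2) :=
        Summable.tsum_le_tsum (fun j => hfle (j + N))
          ((summable_nat_add_iff N).2 hfsum) ((summable_nat_add_iff N).2 maj_summable)
      have h2 := tail_bound N hNpos
      have h3 : 2 / Real.sqrt N ≤ 2 * Real.sqrt x := by
        have hsN : Real.sqrt (1/x) ≤ Real.sqrt N := Real.sqrt_le_sqrt hNge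
        have hsNpos : 0 < Real.sqrt (N:ℝ) := Real.sqrt_pos.2 (by linarith)
        have h4 : Real.sqrt (1/x) = 1 / Real.sqrt x := by
          rw [one_div, Real.sqrt_inv, one_div]
        have h5 : 1 / Real.sqrt x ≤ Real.sqrt N := h4 ▸ hsN
        rw [div_le_iff₀ hsx] at h5
        rw [div_le_iff₀ hsNpos]
        nlinarith
      linarith
    -- head bound
    have hhead : ∑ n ∈ Finset.range N, f n ≤ 3 * Real.sqrt x := by
      rcases le_or_gt 1 x with hx1 | hx1
      · -- x ≥ 1 : N = 1
        have h1x : 1 ≤ Real.sqrt x := by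
          rw [show (1:ℝ) = Real.sqrt 1 by simp]
          exact Real.sqrt_le_sqrt hx1
        have hNe : N = 1 := by
          have hle : N ≤ 1 := Nat.ceil_le.2 (by push_cast; rw [div_le_one hxpos]; exact hx1)
          omega
        rw [hNe, Finset.sum_range_one]
        have := hfle 0
        have h2 : ((0:ℕ):ℝ) + 1 = 1 := by norm_num
        have h3 : (1 / (((0:ℕ):ℝ)+1) ^ ((3:ℝ)/2)) = 1 := by
          rw [h2, Real.one_rpow]; norm_num
        rw [h3] at this
        linarith
      · -- x < 1
        have hx1' : (1:ℝ) ≤ 1/x := by rw [le_div_iff₀ hxpos]; linarith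
        have hNlt : (N:ℝ) < 1/x + 1 := Nat.ceil_lt_add_one (by positivity)
        have hxN2 : x * N ≤ 2 := by
          have h6 : (N:ℝ) ≤ 2/x := by
            rw [show (2:ℝ)/x = 1/x + 1/x by ring]
            linarith
          rw [div_eq_mul_inv] at h6
          calc x * N ≤ x * (2 * x⁻¹) := by
                apply mul_le_mul_of_nonneg_left h6 hx
            _ = 2 := by field_simp
        have hterm : ∀ n : ℕ, f n ≤ x * (1 / Real.sqrt ((n:ℝ)+1)) := by
          intro n
          have hp : (0:ℝ) < (n:ℝ)+1 := by positivity
          have hsp : 0 < Real.sqrt ((n:ℝ)+1) := Real.sqrt_pos.2 hp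
          have hexp : 1 - Real.exp (-x * ((n:ℝ)+1)) ≤ x * ((n:ℝ)+1) := by
            have := Real.add_one_le_exp (-x * ((n:ℝ)+1))
            linarith
          calc f n ≤ (1 / ((n:ℝ)+1) ^ ((3:ℝ)/2)) * (x * ((n:ℝ)+1)) :=
                mul_le_mul_of_nonneg_left hexp (by positivity)
            _ = x * (1 / Real.sqrt ((n:ℝ)+1)) := by
                rw [rpow_32 _ hp]
                field_simp
        have hsqN : 0 < Real.sqrt (N:ℝ) := Real.sqrt_pos.2 (by linarith)
        have hsqN2 : Real.sqrt (N:ℝ) ^ 2 = N := Real.sq_sqrt (by linarith)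
        calc ∑ n ∈ Finset.range N, f n
            ≤ ∑ n ∈ Finset.range N, x * (1 / Real.sqrt ((n:ℝ)+1)) :=
              Finset.sum_le_sum fun n _ => hterm n
          _ = x * ∑ n ∈ Finset.range N, 1 / Real.sqrt ((n:ℝ)+1) := by
              rw [Finset.mul_sum]
          _ ≤ x * (2 * Real.sqrt N) :=
              mul_le_mul_of_nonneg_left (head_bound N) hx
          _ ≤ 3 * Real.sqrt x := by
              -- (2 x √N)² = 4 x² N ≤ 8 x ≤ 9 x = (3√x)²
              have hxy : (Real.sqrt x * Real.sqrt N)^2 = x * N := by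
                rw [mul_pow, hsx2, hsqN2]
              have key : 2 * (Real.sqrt x * Real.sqrt N) ≤ 3 := by
                nlinarith [mul_pos hsx hsqN, hxy, hxN2]
              have hprod : Real.sqrt x * (2 * (Real.sqrt x * Real.sqrt N)) ≤ Real.sqrt x * 3 :=
                mul_le_mul_of_nonneg_left key hsx.le
              have hid : Real.sqrt x * (2 * (Real.sqrt x * Real.sqrt N)) = x * (2 * Real.sqrt N) := by
                linear_combination 2 * Real.sqrt (N:ℝ) * hsx2
              linarith
    have hsplit := Summable.sum_add_tsum_nat_add N hfsum
    calc (∑' n : ℕ, f n) = ∑ n ∈ Finset.range N, f n + ∑' j : ℕ, f (j + N) := hsplit.symm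
      _ ≤ 3 * Real.sqrt x + 2 * Real.sqrt x := add_le_add hhead htail
      _ = 5 * Real.sqrt x := by ring
end

section
/- One has Σ_{n≥0} e^{−(n+1)} (n+1)^{n−1}/n! = 1. -/
open Finset Function Real Filter Set

set_option maxHeartbeats 1000000

noncomputable def cB : ℕ → ℝ
  | 0 => 0
  | (m+1) => ((m+1 : ℕ) : ℝ)^m / ((m+1).factorial : ℝ)


lemma fwdDiff_pow_eq_zero : ∀ (n : ℕ), ∀ (j : ℕ), j < n →
    (fwdDiff (1:ℕ))^[n] (fun x : ℕ => (x:ℝ)^j) = 0 := by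
  intro n
  induction n with
  | zero => intro j hj; omega
  | succ n ih =>
    intro j hj
    rw [Function.iterate_succ_apply]
    have hΔ : fwdDiff (1:ℕ) (fun x : ℕ => (x:ℝ)^j)
        = ∑ i ∈ Finset.range j, ((j.choose i : ℝ) • fun x : ℕ => (x:ℝ)^i) := by
      funext x
      have : ((x + 1 : ℕ) : ℝ)^j = ∑ i ∈ Finset.range (j+1), (x:ℝ)^i * (j.choose i : ℝ) := by
        push_cast
        rw [add_pow]
        simp
      simp only [fwdDiff, this, Finset.sum_range_succ]
      simp [Finset.sum_apply, mul_comm]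
    rw [hΔ, fwdDiff_iter_finset_sum]
    refine Finset.sum_eq_zero fun i hi => ?_
    have hi' := Finset.mem_range.mp hi
    rw [fwdDiff_iter_const_smul, ih i (by omega), smul_zero]

lemma alt_sum_pow_eq_zero {n j : ℕ} (hj : j < n) :
    ∑ m ∈ Finset.range (n+1), (-1:ℝ)^(n-m) * (n.choose m) * (m:ℝ)^j = 0 := by
  have h := fwdDiff_iter_eq_sum_shift (1:ℕ) (fun x : ℕ => (x:ℝ)^j) n 0
  rw [fwdDiff_pow_eq_zero n j hj] at h
  simp only [Pi.zero_apply, zero_add, smul_eq_mul, zsmul_eq_mul, smul_eq_mul] at h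
  rw [eq_comm] at h
  rw [← h]
  refine Finset.sum_congr rfl fun m _ => ?_
  push_cast
  ring

/-- Borel coefficients: `cB 0 = 0`, `cB (m+1) = (m+1)^m / (m+1)!`. -/

lemma cB_nonneg (m : ℕ) : 0 ≤ cB m := by
  cases m with
  | zero => simp [cB]
  | succ m => unfold cB; positivity

lemma cB_succ_le (j : ℕ) : cB (j + 2) ≤ Real.exp 1 * cB (j + 1) := by
  show ((j+2 : ℕ) : ℝ)^(j+1) / ((j+2).factorial : ℝ)
      ≤ Real.exp 1 * (((j+1 : ℕ) : ℝ)^j / ((j+1).factorial : ℝ))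
  have h1 : ((j:ℝ)+2)^j ≤ Real.exp 1 * ((j:ℝ)+1)^j := by
    have hb : (j:ℝ) + 2 ≤ ((j:ℝ)+1) * Real.exp (1/((j:ℝ)+1)) := by
      have := Real.add_one_le_exp (1/((j:ℝ)+1))
      calc (j:ℝ) + 2 = ((j:ℝ)+1) * (1/((j:ℝ)+1) + 1) := by field_simp; ring
        _ ≤ ((j:ℝ)+1) * Real.exp (1/((j:ℝ)+1)) := by
            apply mul_le_mul_of_nonneg_left _ (by positivity)
            linarith [Real.add_one_le_exp (1/((j:ℝ)+1))]
    calc ((j:ℝ)+2)^j ≤ (((j:ℝ)+1) * Real.exp (1/((j:ℝ)+1)))^j := by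
          apply pow_le_pow_left₀ (by positivity) hb
      _ = ((j:ℝ)+1)^j * Real.exp (1/((j:ℝ)+1))^j := mul_pow _ _ _
      _ = ((j:ℝ)+1)^j * Real.exp ((j:ℝ)/((j:ℝ)+1)) := by
          rw [← Real.exp_nat_mul]
          congr 1
          field_simp
      _ ≤ ((j:ℝ)+1)^j * Real.exp 1 := by
          apply mul_le_mul_of_nonneg_left _ (by positivity)
          apply Real.exp_le_exp.mpr
          rw [div_le_one (by positivity)]; linarith
      _ = Real.exp 1 * ((j:ℝ)+1)^j := mul_comm _ _
  have hfact : ((j+2).factorial : ℝ) = ((j:ℝ)+2) * ((j+1).factorial : ℝ) := by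
    rw [Nat.factorial_succ]; push_cast; ring
  have hp2 : ((j+2:ℕ):ℝ) = (j:ℝ)+2 := by push_cast; ring
  have hp1 : ((j+1:ℕ):ℝ) = (j:ℝ)+1 := by push_cast; ring
  rw [hp2, hp1, hfact, pow_succ]
  rw [div_le_iff₀ (by positivity)]
  have hfp : (0:ℝ) < ((j+1).factorial : ℝ) := by positivity
  calc ((j:ℝ)+2)^j * ((j:ℝ)+2)
      ≤ (Real.exp 1 * ((j:ℝ)+1)^j) * ((j:ℝ)+2) := by
        apply mul_le_mul_of_nonneg_right h1 (by positivity)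
    _ = Real.exp 1 * (((j:ℝ)+1)^j / ((j+1).factorial : ℝ)) * (((j:ℝ)+2) * ((j+1).factorial : ℝ)) := by
        field_simp

lemma summable_cB {y : ℝ} (hy : 0 ≤ y) (h : Real.exp 1 * y < 1) :
    Summable (fun m => cB m * y ^ m) := by
  apply summable_of_ratio_norm_eventually_le (r := Real.exp 1 * y) h
  filter_upwards [Filter.eventually_ge_atTop 1] with m hm
  obtain ⟨j, rfl⟩ := Nat.exists_eq_add_of_le hm
  have h1 : cB (1 + j + 1) ≤ Real.exp 1 * cB (1 + j) := by
    have := cB_succ_le j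
    simpa [add_comm, add_assoc, add_left_comm] using this
  have hnn : ∀ k, 0 ≤ cB k * y ^ k := fun k => mul_nonneg (cB_nonneg k) (pow_nonneg hy k)
  rw [Real.norm_eq_abs, Real.norm_eq_abs, abs_of_nonneg (hnn _), abs_of_nonneg (hnn _)]
  rw [pow_succ]
  calc cB (1 + j + 1) * (y ^ (1 + j) * y)
      ≤ (Real.exp 1 * cB (1 + j)) * (y ^ (1 + j) * y) :=
        mul_le_mul_of_nonneg_right h1 (by positivity)
    _ = Real.exp 1 * y * (cB (1 + j) * y ^ (1 + j)) := by ring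

lemma exp_tsum (y : ℝ) : ∑' k : ℕ, y ^ k / (k.factorial : ℝ) = Real.exp y := by
  rw [Real.exp_eq_exp_ℝ, NormedSpace.exp_eq_tsum_div]

-- the antidiagonal sum computation
lemma S_eq (x : ℝ) (n : ℕ) (hn2 : 2 ≤ n) :
    ∀ m ∈ Finset.range (n+1),
      cB m * x^m * ((-(m:ℝ)*x)^(n-m)/((n-m).factorial:ℝ))
        = (x^n/((n).factorial : ℝ)) * ((-1:ℝ)^(n-m) * ((n).choose m : ℝ) * (m:ℝ)^(n-1)) := by
  intro m hm
  match m with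
  | 0 =>
    have : ((0:ℕ):ℝ)^(n-1) = 0 := by
      rw [Nat.cast_zero]; exact zero_pow (by omega)
    simp only [cB, this]
    norm_num
  | (i+1) =>
    have him : i + 1 ≤ n := by have := Finset.mem_range.mp hm; omega
    have hr : n - (i+1) = n - 1 - i := by omega
    have hpow : (-((i+1:ℕ):ℝ)*x)^(n-(i+1))
        = (-1:ℝ)^(n-(i+1)) * ((i+1:ℕ):ℝ)^(n-(i+1)) * x^(n-(i+1)) := by
      rw [neg_mul, neg_pow, mul_pow]; ring
    have hx1 : x^(i+1) * x^(n-(i+1)) = x^n := by rw [← pow_add]; congr 1; omega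
    have hm1 : ((i+1:ℕ):ℝ)^i * ((i+1:ℕ):ℝ)^(n-(i+1)) = ((i+1:ℕ):ℝ)^(n-1) := by
      rw [← pow_add]; congr 1; omega
    have hfacR : ((n.choose (i+1) : ℕ) : ℝ) * ((i+1).factorial:ℝ) * ((n-(i+1)).factorial:ℝ)
        = (n.factorial : ℝ) := by
      exact_mod_cast congrArg (Nat.cast (R := ℝ)) (Nat.choose_mul_factorial_mul_factorial him)
    show ((i+1:ℕ):ℝ)^i / ((i+1).factorial:ℝ) * x^(i+1)
        * ((-((i+1:ℕ):ℝ)*x)^(n-(i+1)) / ((n-(i+1)).factorial:ℝ)) = _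
    rw [hpow]
    have hf1 : ((i+1).factorial:ℝ) ≠ 0 := by positivity
    have hf2 : ((n-(i+1)).factorial:ℝ) ≠ 0 := by positivity
    have hf3 : (n.factorial:ℝ) ≠ 0 := by positivity
    field_simp
    rw [← hfacR]
    push_cast at hm1 hx1 ⊢
    linear_combination (((n.choose (i+1):ℕ):ℝ) * (((i+1).factorial:ℕ):ℝ) * (((n-(i+1)).factorial:ℕ):ℝ)) * (x^(i+1)*x^(n-(i+1)) * hm1 + ((i:ℝ)+1)^(n-1) * hx1)

lemma antidiag_sum (x : ℝ) (n : ℕ) :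
    ∑ p ∈ Finset.HasAntidiagonal.antidiagonal n,
      (cB p.1 * x^p.1 * ((-(p.1:ℝ)*x)^p.2/((p.2).factorial:ℝ)))
      = if n = 1 then x else 0 := by
  rw [Finset.Nat.sum_antidiagonal_eq_sum_range_succ
    (fun a b => cB a * x^a * ((-(a:ℝ)*x)^b/((b).factorial:ℝ))) n]
  match n with
  | 0 => simp [cB]
  | 1 => simp [cB, Finset.sum_range_succ]
  | (n+2) =>
    rw [Finset.sum_congr rfl (S_eq x (n+2) (by omega)), ← Finset.mul_sum]
    have h0 : n + 2 - 1 < n + 2 := by omega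
    rw [alt_sum_pow_eq_zero h0, mul_zero]
    simp

lemma exp_quarter_lt : Real.exp (1/4 : ℝ) < 4/3 := by
  have h4 : Real.exp (1/4 : ℝ) ^ 4 = Real.exp 1 := by
    rw [← Real.exp_nat_mul]; norm_num
  have he : Real.exp 1 < 2.7182818286 := Real.exp_one_lt_d9
  have : Real.exp (1/4:ℝ) ^ 4 < (4/3:ℝ)^4 := by
    rw [h4]; nlinarith
  exact lt_of_pow_lt_pow_left₀ 4 (by norm_num) this

lemma bound_small {x : ℝ} (hx0 : 0 < x) (hx : x ≤ 1/4) :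
    Real.exp 1 * (x * Real.exp x) < 1 := by
  have h1 : Real.exp x ≤ Real.exp (1/4:ℝ) := Real.exp_le_exp.mpr hx
  have h2 := exp_quarter_lt
  have he : Real.exp 1 < 2.7182818286 := Real.exp_one_lt_d9
  have hep : (0:ℝ) < Real.exp x := Real.exp_pos x
  have hxe : x * Real.exp x < 1/3 := by
    nlinarith [mul_le_mul hx h1 hep.le (by norm_num : (0:ℝ) ≤ 1/4)]
  have h3 : Real.exp 1 * (x * Real.exp x) < Real.exp 1 * (1/3) :=
    mul_lt_mul_of_pos_left hxe (Real.exp_pos 1)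
  nlinarith

lemma Fg_small {x : ℝ} (hx0 : 0 < x) (hx : x ≤ 1/4) :
    ∑' m : ℕ, cB m * (x * Real.exp (-x))^m = x := by
  set f : ℕ × ℕ → ℝ :=
    fun p => cB p.1 * x ^ p.1 * ((-(p.1:ℝ) * x) ^ p.2 / (p.2.factorial : ℝ)) with hf
  have habs_eq : ∀ p : ℕ × ℕ, |f p| = cB p.1 * x ^ p.1 * (((p.1:ℝ) * x) ^ p.2 / (p.2.factorial : ℝ)) := by
    intro ⟨m, k⟩
    simp only [hf, abs_mul, abs_div, abs_pow, abs_neg, abs_mul]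
    rw [abs_of_nonneg (cB_nonneg m), abs_of_nonneg hx0.le, abs_of_nonneg (by positivity : (0:ℝ) ≤ (m:ℝ)),
      abs_of_nonneg (by positivity : (0:ℝ) ≤ ((k.factorial : ℝ)))]
  have hrow_abs : ∀ m : ℕ, Summable (fun k => |f (m, k)|) := by
    intro m
    rw [show (fun k => |f (m, k)|) = fun k => cB m * x ^ m * (((m:ℝ) * x) ^ k / (k.factorial : ℝ))
      from funext fun k => habs_eq (m, k)]
    exact ((Real.summable_pow_div_factorial ((m:ℝ)*x)).mul_left _)
  have hrow_sum : ∀ m : ℕ, ∑' k, |f (m, k)| = cB m * (x * Real.exp x) ^ m := by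
    intro m
    rw [show (fun k => |f (m, k)|) = fun k => cB m * x ^ m * (((m:ℝ) * x) ^ k / (k.factorial : ℝ))
      from funext fun k => habs_eq (m, k)]
    rw [tsum_mul_left, exp_tsum ((m:ℝ)*x), mul_pow, mul_assoc]
    congr 2
    rw [← Real.exp_nat_mul]
  have habs : Summable (fun p : ℕ × ℕ => |f p|) := by
    apply (summable_prod_of_nonneg (fun p => abs_nonneg _)).mpr
    refine ⟨hrow_abs, ?_⟩
    rw [show (fun m => ∑' k, |f (m, k)|) = fun m => cB m * (x * Real.exp x) ^ m
      from funext hrow_sum]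
    exact summable_cB (by positivity) (bound_small hx0 hx)
  have hsum : Summable f := habs.of_abs
  have hrow : ∀ m : ℕ, Summable (fun k => f (m, k)) := fun m => (hrow_abs m).of_abs
  -- first evaluation: rows
  have h1 : ∑' p : ℕ × ℕ, f p = ∑' m : ℕ, cB m * (x * Real.exp (-x))^m := by
    rw [Summable.tsum_prod' hsum hrow]
    congr 1
    funext m
    have : ∑' k, f (m, k) = cB m * x ^ m * ∑' k, ((-(m:ℝ) * x) ^ k / (k.factorial : ℝ)) := by
      rw [← tsum_mul_left]
    rw [this, exp_tsum (-(m:ℝ)*x), mul_pow, mul_assoc]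
    congr 2
    rw [← Real.exp_nat_mul]
    ring_nf
  -- second evaluation: antidiagonals
  have h2 : ∑' p : ℕ × ℕ, f p = x := by
    rw [← Finset.HasAntidiagonal.sigmaAntidiagonalEquivProd.tsum_eq f]
    have hg : Summable (fun s : (Σ n : ℕ, {p // p ∈ Finset.HasAntidiagonal.antidiagonal n}) =>
        f (Finset.HasAntidiagonal.sigmaAntidiagonalEquivProd s)) :=
      (Equiv.summable_iff _).mpr hsum
    rw [Summable.tsum_sigma' (fun n => Summable.of_finite) hg]
    have : ∀ n : ℕ, ∑' (p : Finset.HasAntidiagonal.antidiagonal n), f p = if n = 1 then x else 0 := by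
      intro n
      rw [Finset.tsum_subtype]
      exact antidiag_sum x n
    rw [show (fun n => ∑' (p : Finset.HasAntidiagonal.antidiagonal n),
        f (Finset.HasAntidiagonal.sigmaAntidiagonalEquivProd ⟨n, p⟩)) = fun n => if n = 1 then x else 0
      from funext fun n => this n]
    exact tsum_ite_eq 1 (fun _ => x)
  rw [← h1, h2]

noncomputable def FB : ℝ → ℝ := fun y => ∑' m : ℕ, cB m * y ^ m

lemma g_lt {t : ℝ} (ht0 : 0 < t) (ht1 : t < 1) : t * Real.exp (-t) < Real.exp (-1) := by
  have h : t < Real.exp (t - 1) := by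
    have := Real.add_one_lt_exp (x := t - 1) (sub_ne_zero.mpr (ne_of_lt ht1))
    linarith
  calc t * Real.exp (-t) < Real.exp (t-1) * Real.exp (-t) :=
        mul_lt_mul_of_pos_right h (Real.exp_pos _)
    _ = Real.exp (-1) := by rw [← Real.exp_add]; ring_nf

lemma analyticAt_FB {y₀ : ℝ} (h : |y₀| < Real.exp (-1)) : AnalyticAt ℝ FB y₀ := by
  set p := FormalMultilinearSeries.ofScalars ℝ cB with hp
  have hF : ∀ y : ℝ, p.sum y = FB y := by
    intro y
    exact tsum_congr fun n => by
      rw [FormalMultilinearSeries.ofScalars_apply_eq, smul_eq_mul]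
  set s : ℝ := (|y₀| + Real.exp (-1))/2 with hs
  have hs0 : 0 < s := by positivity
  have hsy : |y₀| < s := by rw [hs]; linarith
  have hse : s < Real.exp (-1) := by rw [hs]; linarith
  have hsum : Summable (fun n => ‖p n‖ * s ^ n) := by
    have : Summable (fun n => cB n * s ^ n) := by
      apply summable_cB hs0.le
      have : Real.exp 1 * s < Real.exp 1 * Real.exp (-1) :=
        mul_lt_mul_of_pos_left hse (Real.exp_pos 1)
      rw [← Real.exp_add] at this
      simpa using this
    apply this.congr
    intro n
    rw [FormalMultilinearSeries.ofScalars_norm, Real.norm_eq_abs, abs_of_nonneg (cB_nonneg n)]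
  have hrad : (s.toNNReal : ENNReal) ≤ p.radius := by
    apply p.le_radius_of_summable_norm
    convert hsum using 2 with n
    rw [Real.coe_toNNReal _ hs0.le]
  have hrad0 : 0 < p.radius := lt_of_lt_of_le (by simpa using hs0) hrad
  have hball := p.hasFPowerSeriesOnBall hrad0
  have hy : y₀ ∈ Metric.eball (0:ℝ) p.radius := by
    rw [Metric.mem_eball, edist_zero_right]
    apply lt_of_lt_of_le _ hrad
    have h1 : ‖y₀‖₊ < s.toNNReal := by
      rw [← NNReal.coe_lt_coe, coe_nnnorm, Real.norm_eq_abs, Real.coe_toNNReal _ hs0.le]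
      exact hsy
    exact_mod_cast h1
  have := hball.analyticAt_of_mem hy
  exact this.congr (Filter.Eventually.of_forall hF)

lemma Fg_all : Set.EqOn (fun t : ℝ => FB (t * Real.exp (-t))) id (Set.Ioo (0:ℝ) 1) := by
  have hf : AnalyticOnNhd ℝ (fun t : ℝ => FB (t * Real.exp (-t))) (Set.Ioo (0:ℝ) 1) := by
    intro t ht
    apply AnalyticAt.comp (g := FB) (f := fun t : ℝ => t * Real.exp (-t))
    · apply analyticAt_FB
      rw [abs_of_nonneg (mul_nonneg ht.1.le (Real.exp_pos _).le)]
      exact g_lt ht.1 ht.2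
    · exact (analyticAt_id).mul (analyticAt_rexp.comp (analyticAt_id).neg)
  have hg : AnalyticOnNhd ℝ (id : ℝ → ℝ) (Set.Ioo (0:ℝ) 1) := analyticOnNhd_id
  have hmem : (1/8 : ℝ) ∈ Set.Ioo (0:ℝ) 1 := by constructor <;> norm_num
  have hfg : (fun t : ℝ => FB (t * Real.exp (-t))) =ᶠ[nhds (1/8 : ℝ)] id := by
    filter_upwards [Ioo_mem_nhds (show (0:ℝ) < 1/8 by norm_num) (show (1/8:ℝ) < 1/4 by norm_num)]
      with t ht
    exact Fg_small ht.1 (le_of_lt ht.2)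
  exact hf.eqOn_of_preconnected_of_eventuallyEq hg isPreconnected_Ioo hmem hfg

lemma partial_le (M : ℕ) : ∑ m ∈ Finset.range M, cB m * (Real.exp (-1))^m ≤ 1 := by
  have hc : ContinuousAt (fun t : ℝ => ∑ m ∈ Finset.range M, cB m * (t * Real.exp (-t))^m) 1 := by
    fun_prop
  have hcont : Tendsto (fun t : ℝ => ∑ m ∈ Finset.range M, cB m * (t * Real.exp (-t))^m)
      (nhdsWithin 1 (Set.Iio 1)) (nhds (∑ m ∈ Finset.range M, cB m * (Real.exp (-1))^m)) := by
    have h2 : Tendsto (fun t : ℝ => ∑ m ∈ Finset.range M, cB m * (t * Real.exp (-t))^m)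
        (nhdsWithin 1 (Set.Iio 1)) (nhds (∑ m ∈ Finset.range M, cB m * ((1:ℝ) * Real.exp (-1))^m)) :=
      (hc.tendsto).mono_left nhdsWithin_le_nhds
    simpa using h2
  apply le_of_tendsto hcont
  filter_upwards [Ioo_mem_nhdsLT_of_mem (show (1:ℝ) ∈ Set.Ioc (0:ℝ) 1 by constructor <;> norm_num)]
    with t ht
  have hg0 : 0 ≤ t * Real.exp (-t) := mul_nonneg ht.1.le (Real.exp_pos _).le
  have hge : Real.exp 1 * (t * Real.exp (-t)) < 1 := by
    have := mul_lt_mul_of_pos_left (g_lt ht.1 ht.2) (Real.exp_pos 1)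
    rw [← Real.exp_add] at this
    simpa using this
  calc ∑ m ∈ Finset.range M, cB m * (t * Real.exp (-t))^m
      ≤ FB (t * Real.exp (-t)) := by
        apply Summable.sum_le_tsum _ (fun m _ => mul_nonneg (cB_nonneg m) (pow_nonneg hg0 m))
        exact summable_cB hg0 hge
    _ = t := Fg_all ⟨ht.1, ht.2⟩
    _ ≤ 1 := le_of_lt ht.2

lemma summable_boundary : Summable (fun m : ℕ => cB m * (Real.exp (-1))^m) :=
  summable_of_sum_range_le
    (fun m => mul_nonneg (cB_nonneg m) (pow_nonneg (Real.exp_pos _).le m)) partial_le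

lemma tsum_boundary : (∑' m : ℕ, cB m * (Real.exp (-1))^m) = 1 := by
  have hlim1 : Tendsto (fun t : ℝ => FB (t * Real.exp (-t)))
      (nhdsWithin 1 (Set.Iio 1)) (nhds (∑' m : ℕ, cB m * (Real.exp (-1))^m)) := by
    apply tendsto_tsum_of_dominated_convergence
      (bound := fun m : ℕ => cB m * (Real.exp (-1))^m) summable_boundary
    · intro m
      have hc : ContinuousAt (fun t : ℝ => cB m * (t * Real.exp (-t))^m) 1 := by fun_prop
      have h2 := (hc.tendsto).mono_left
        (nhdsWithin_le_nhds (s := Set.Iio (1:ℝ)))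
      simpa using h2
    · filter_upwards [Ioo_mem_nhdsLT_of_mem
        (show (1:ℝ) ∈ Set.Ioc (0:ℝ) 1 by constructor <;> norm_num)] with t ht m
      have hg0 : 0 ≤ t * Real.exp (-t) := mul_nonneg ht.1.le (Real.exp_pos _).le
      rw [Real.norm_eq_abs, abs_of_nonneg (mul_nonneg (cB_nonneg m) (pow_nonneg hg0 m))]
      exact mul_le_mul_of_nonneg_left
        (pow_le_pow_left₀ hg0 (le_of_lt (g_lt ht.1 ht.2)) m) (cB_nonneg m)
  have hlim2 : Tendsto (fun t : ℝ => FB (t * Real.exp (-t)))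
      (nhdsWithin 1 (Set.Iio 1)) (nhds 1) := by
    have : Tendsto (fun t : ℝ => t) (nhdsWithin 1 (Set.Iio 1)) (nhds 1) :=
      tendsto_id.mono_left nhdsWithin_le_nhds
    apply this.congr'
    filter_upwards [Ioo_mem_nhdsLT_of_mem
      (show (1:ℝ) ∈ Set.Ioc (0:ℝ) 1 by constructor <;> norm_num)] with t ht
    exact (Fg_all ⟨ht.1, ht.2⟩).symm
  exact tendsto_nhds_unique hlim1 hlim2

/-- The Borel distribution with parameter 1 sums to one:
`Σ_{n≥0} e^{−(n+1)} (n+1)^{n−1}/n! = 1`. -/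
theorem borel_distribution_sums_to_one :
    (∑' n : ℕ, Real.exp (-((n : ℝ) + 1)) * ((n : ℝ) + 1) ^ ((n : ℝ) - 1) / (n.factorial : ℝ))
      = 1 := by
  have hterm : ∀ n : ℕ,
      Real.exp (-((n : ℝ) + 1)) * ((n : ℝ) + 1) ^ ((n : ℝ) - 1) / (n.factorial : ℝ)
        = cB (n+1) * (Real.exp (-1))^(n+1) := by
    intro n
    have hpos : (0:ℝ) < (n : ℝ) + 1 := by positivity
    have hrpow : ((n : ℝ) + 1) ^ ((n : ℝ) - 1) = ((n:ℝ)+1)^(n:ℕ) / ((n:ℝ)+1) := by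
      rw [Real.rpow_sub hpos, Real.rpow_one, Real.rpow_natCast]
    have hexp : (Real.exp (-1))^(n+1) = Real.exp (-((n:ℝ)+1)) := by
      rw [← Real.exp_nat_mul]
      congr 1
      push_cast
      ring
    rw [hrpow, hexp]
    show _ = ((n+1 : ℕ) : ℝ)^n / ((n+1).factorial : ℝ) * Real.exp (-((n:ℝ)+1))
    rw [Nat.factorial_succ]
    push_cast
    have hfn : ((n.factorial : ℕ) : ℝ) ≠ 0 := by positivity
    field_simp
  rw [tsum_congr hterm]
  have h0 := Summable.tsum_eq_zero_add summable_boundary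
  rw [show cB 0 * (Real.exp (-1))^0 = 0 by simp [cB]] at h0
  rw [tsum_boundary] at h0
  linarith [h0]
end

section
/- Let α ∈ (1/2,1), λ > 0, ν > 0, a ∈ ℝ and t₀ > 0. Then there is at most one continuous function g : [0,t₀] → ℝ satisfying the Volterra equation g(t) = ∫_0^t (1/λ) f^{α,λ}(t−s) (a + (ν²/2) g(s)²) ds for all t ∈ [0,t₀]. -/
open MeasureTheory Set

/-- Mittag-Leffler function `E_{α,β}(z) = Σ_{n≥0} z^n / Γ(αn+β)`. -/
noncomputable def mlE (α β z : ℝ) : ℝ := ∑' n : ℕ, z ^ n / Real.Gamma (α * n + β)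

/-- Mittag-Leffler density `f^{α,λ}(t) = λ t^{α−1} E_{α,α}(−λ t^α)`. -/
noncomputable def mlf (α lam t : ℝ) : ℝ := lam * t ^ (α - 1) * mlE α α (-lam * t ^ α)

lemma ml_summable {α : ℝ} (hα2 : 1/2 < α) (hα1 : α < 1) {R : ℝ} (hR : 0 ≤ R) :
    Summable (fun n : ℕ => R ^ n / Real.Gamma (α * n + α)) := by
  have hα0 : 0 < α := by linarith
  set a : ℕ → ℝ := fun n => R ^ n / Real.Gamma (α * n + α) with ha
  have hapos : ∀ n, 0 ≤ a n := fun n =>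
    div_nonneg (pow_nonneg hR n) (Real.Gamma_pos_of_pos (by positivity)).le
  -- recurrence
  have hrec : ∀ n : ℕ, α * n + α ≥ 1 → a (n + 2) ≤ R ^ 2 / (α * n + α) * a n := by
    intro n hn
    have hx : (0:ℝ) < α * n + α := by linarith
    have h1 : Real.Gamma (α * n + α + 1) = (α * n + α) * Real.Gamma (α * n + α) :=
      Real.Gamma_add_one (by positivity)
    have hmono : Real.Gamma (α * n + α + 1) ≤ Real.Gamma (α * (n + 2) + α) := by
      rcases eq_or_lt_of_le (show α * n + α + 1 ≤ α * (n+2) + α by nlinarith) with h | h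
      · rw [h]
      · exact (Real.Gamma_strictMonoOn_Ici (by simp [mem_Ici]; linarith)
          (by simp [mem_Ici]; nlinarith) h).le
    have hG2 : 0 < Real.Gamma (α * (n+2) + α) := Real.Gamma_pos_of_pos (by positivity)
    have hG : 0 < Real.Gamma (α * n + α) := Real.Gamma_pos_of_pos hx
    have heq : a (n + 2) = R ^ 2 * R ^ n / Real.Gamma (α * (n+2) + α) := by
      simp only [ha]
      push_cast
      ring_nf
    have key : R ^ 2 * R ^ n / Real.Gamma (α * (n+2) + α)
        ≤ R ^ 2 * R ^ n / ((α * n + α) * Real.Gamma (α * n + α)) := by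
      apply div_le_div_of_nonneg_left (by positivity) (by positivity)
      rw [← h1]; exact hmono
    calc a (n+2) = R ^ 2 * R ^ n / Real.Gamma (α * (n+2) + α) := heq
      _ ≤ R ^ 2 * R ^ n / ((α * n + α) * Real.Gamma (α * n + α)) := key
      _ = R ^ 2 / (α * n + α) * a n := by
          simp only [ha]; field_simp
  -- choose N
  obtain ⟨N, hN⟩ := exists_nat_ge ((max 1 (4 * R ^ 2)) / α)
  have hNa : ∀ n : ℕ, N ≤ n → max 1 (4 * R ^ 2) ≤ α * n + α := by
    intro n hn
    have : (N:ℝ) ≤ n := Nat.cast_le.mpr hn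
    have h2 : max 1 (4 * R ^ 2) ≤ α * N := by
      rw [div_le_iff₀ hα0] at hN; linarith [hN]
    nlinarith
  -- geometric bound
  set C : ℝ := max (a N) (2 * a (N+1)) with hC
  have hbound : ∀ m : ℕ, a (N + m) ≤ C * (1/2) ^ m := by
    intro m
    induction m using Nat.strong_induction_on with
    | _ m ih =>
      match m with
      | 0 => simp only [pow_zero, mul_one, Nat.add_zero]; exact le_max_left _ _
      | 1 =>
        have := le_max_right (a N) (2 * a (N+1))
        simp only [pow_one]
        linarith
      | (m + 2) =>
        have hN' := hNa (N + m) (by omega)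
        push_cast at hN'
        have h1 : α * (N + m) + α ≥ 1 := le_trans (le_max_left _ _) hN'
        have h4 : 4 * R ^ 2 ≤ α * (N + m) + α := le_trans (le_max_right _ _) hN'
        have hx : (0:ℝ) < α * (N + m) + α := by linarith
        have hrec' := hrec (N + m) (by push_cast; push_cast at h1; linarith)
        have hratio : R ^ 2 / (α * (N + m) + α) ≤ 1 / 4 := by
          rw [div_le_div_iff₀ hx (by norm_num)]; linarith
        have hih := ih m (by omega)
        have : a (N + (m + 2)) = a ((N + m) + 2) := by ring_nf
        rw [this]
        calc a ((N+m)+2) ≤ R ^ 2 / (α * (N+m) + α) * a (N+m) := by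
              convert hrec' using 3 <;> push_cast <;> ring
          _ ≤ (1/4) * (C * (1/2)^m) := by
              apply mul_le_mul hratio hih (hapos _)
              norm_num
          _ = C * (1/2) ^ (m+2) := by ring
  have hsum : Summable (fun m : ℕ => a (N + m)) := by
    apply Summable.of_nonneg_of_le (fun m => hapos _) hbound
    exact (summable_geometric_of_lt_one (by norm_num) (by norm_num)).mul_left C
  exact (summable_nat_add_iff N).mp (by simpa [add_comm] using hsum)

lemma mlE_abs_le {α : ℝ} (hα2 : 1/2 < α) (hα1 : α < 1) {R z : ℝ} (hR : 0 ≤ R) (hz : |z| ≤ R) :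
    |mlE α α z| ≤ ∑' n : ℕ, R ^ n / Real.Gamma (α * n + α) := by
  have hα0 : 0 < α := by linarith
  have hsa := ml_summable hα2 hα1 hR
  have hptw : ∀ n : ℕ, ‖z ^ n / Real.Gamma (α * n + α)‖ ≤ R ^ n / Real.Gamma (α * n + α) := by
    intro n
    have hG : 0 < Real.Gamma (α * n + α) := Real.Gamma_pos_of_pos (by positivity)
    rw [Real.norm_eq_abs, abs_div, abs_of_pos hG, abs_pow]
    gcongr
  have hsn : Summable (fun n : ℕ => ‖z ^ n / Real.Gamma (α * n + α)‖) :=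
    Summable.of_nonneg_of_le (fun n => norm_nonneg _) hptw hsa
  calc |mlE α α z| ≤ ∑' n : ℕ, ‖z ^ n / Real.Gamma (α * n + α)‖ := by
        rw [← Real.norm_eq_abs]; exact norm_tsum_le_tsum_norm hsn
    _ ≤ ∑' n : ℕ, R ^ n / Real.Gamma (α * n + α) := Summable.tsum_le_tsum hptw hsn hsa

lemma mlE_continuousOn {α : ℝ} (hα2 : 1/2 < α) (hα1 : α < 1) {R : ℝ} (hR : 0 ≤ R) :
    ContinuousOn (fun z => mlE α α z) (Icc (-R) R) := by
  have hα0 : 0 < α := by linarith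
  apply continuousOn_tsum (fun n => (continuous_pow n).continuousOn.div_const _)
    (ml_summable hα2 hα1 hR)
  intro n z hz
  have hG : 0 < Real.Gamma (α * n + α) := Real.Gamma_pos_of_pos (by positivity)
  rw [Real.norm_eq_abs, abs_div, abs_of_pos hG, abs_pow]
  gcongr
  exact abs_le.mpr ⟨hz.1, hz.2⟩

/-- Continuity of the kernel on `(0, T]`. -/
lemma mlf_continuousOn {α lam T : ℝ} (hα2 : 1/2 < α) (hα1 : α < 1) (hlam : 0 < lam)
    (hT : 0 < T) : ContinuousOn (fun u => mlf α lam u) (Ioc 0 T) := by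
  have hα0 : 0 < α := by linarith
  have hR : 0 ≤ lam * T ^ α := by positivity
  have h1 : ContinuousOn (fun u : ℝ => lam * u ^ (α - 1)) (Ioc 0 T) := by
    apply continuousOn_const.mul
    intro u hu
    exact (Real.continuousAt_rpow_const u (α - 1) (Or.inl (ne_of_gt hu.1))).continuousWithinAt
  have h2 : ContinuousOn (fun u : ℝ => -lam * u ^ α) (Ioc 0 T) := by
    apply continuousOn_const.mul
    intro u hu
    exact (Real.continuousAt_rpow_const u α (Or.inl (ne_of_gt hu.1))).continuousWithinAt
  have hmaps : MapsTo (fun u : ℝ => -lam * u ^ α) (Ioc 0 T)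
      (Icc (-(lam * T ^ α)) (lam * T ^ α)) := by
    intro u hu
    have h1 : (0:ℝ) < u ^ α := Real.rpow_pos_of_pos hu.1 α
    have h2 : u ^ α ≤ T ^ α := Real.rpow_le_rpow hu.1.le hu.2 hα0.le
    constructor <;> · simp only []; nlinarith
  exact h1.mul (((mlE_continuousOn hα2 hα1 hR).comp h2 hmaps))

/-- Pointwise bound on the kernel. -/
lemma mlf_abs_le {α lam T : ℝ} (hα2 : 1/2 < α) (hα1 : α < 1) (hlam : 0 < lam)
    (hT : 0 < T) {u : ℝ} (hu : u ∈ Ioc 0 T) :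
    |mlf α lam u| ≤ lam * (∑' n : ℕ, (lam * T ^ α) ^ n / Real.Gamma (α * n + α)) *
      u ^ (α - 1) := by
  have hα0 : 0 < α := by linarith
  have hR : 0 ≤ lam * T ^ α := by positivity
  have hz : |(-lam * u ^ α)| ≤ lam * T ^ α := by
    have h1 : (0:ℝ) < u ^ α := Real.rpow_pos_of_pos hu.1 α
    have h2 : u ^ α ≤ T ^ α := Real.rpow_le_rpow hu.1.le hu.2 hα0.le
    rw [abs_of_nonpos (by nlinarith)]
    nlinarith
  have hup : (0:ℝ) < u ^ (α - 1) := Real.rpow_pos_of_pos hu.1 _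
  have := mlE_abs_le hα2 hα1 hR hz
  calc |mlf α lam u| = lam * u ^ (α - 1) * |mlE α α (-lam * u ^ α)| := by
        rw [mlf, abs_mul, abs_of_pos (by positivity)]
    _ ≤ lam * u ^ (α - 1) * (∑' n : ℕ, (lam * T ^ α) ^ n / Real.Gamma (α * n + α)) := by
        apply mul_le_mul_of_nonneg_left this (by positivity)
    _ = _ := by ring

/-- Interval integrability of the kernel times a continuous factor. -/
lemma volterra_integrable {α lam t₀ : ℝ} (hα2 : 1/2 < α) (hα1 : α < 1) (hlam : 0 < lam)
    (ht₀ : 0 < t₀) {F : ℝ → ℝ} (hF : ContinuousOn F (Icc 0 t₀)) {t : ℝ} (ht : t ∈ Icc 0 t₀) :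
    IntervalIntegrable (fun s => (1 / lam) * mlf α lam (t - s) * F s) volume 0 t := by
  have hα0 : 0 < α := by linarith
  rcases eq_or_lt_of_le ht.1 with h0 | h0
  · rw [← h0]
  obtain ⟨BF, hBF⟩ := isCompact_Icc.exists_bound_of_continuousOn hF
  set ME : ℝ := ∑' n : ℕ, (lam * t₀ ^ α) ^ n / Real.Gamma (α * n + α) with hME
  have hME0 : 0 ≤ ME := tsum_nonneg fun n =>
    div_nonneg (by positivity) (Real.Gamma_pos_of_pos (by positivity)).le
  rw [intervalIntegrable_iff_integrableOn_Ioo_of_le ht.1]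
  have hsub : Ioo (0:ℝ) t ⊆ Icc 0 t₀ := fun s hs => ⟨hs.1.le, hs.2.le.trans ht.2⟩
  have hmaps : MapsTo (fun s : ℝ => t - s) (Ioo 0 t) (Ioc 0 t₀) := fun s hs =>
    ⟨by simp [hs.2], by simp; linarith [hs.1, ht.2]⟩
  have hcont : ContinuousOn (fun s => (1 / lam) * mlf α lam (t - s) * F s) (Ioo 0 t) := by
    apply ContinuousOn.mul ?_ (hF.mono hsub)
    apply continuousOn_const.mul
    exact (mlf_continuousOn hα2 hα1 hlam ht₀).comp (continuousOn_const.sub continuousOn_id) hmaps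
  -- dominating function
  have hdom : IntegrableOn (fun s => (1 / lam) * (lam * ME) * BF * (t - s) ^ (α - 1))
      (Ioo 0 t) volume := by
    have h1 : IntervalIntegrable (fun s : ℝ => (t - s) ^ (α - 1)) volume (t - t) (t - 0) :=
      (intervalIntegral.intervalIntegrable_rpow' (by linarith)).comp_sub_left t
    rw [sub_self, sub_zero] at h1
    have h2 := (h1.const_mul ((1 / lam) * (lam * ME) * BF))
    rw [intervalIntegrable_iff_integrableOn_Ioo_of_le ht.1] at h2
    exact h2
  apply hdom.integrable.mono' (hcont.aestronglyMeasurable measurableSet_Ioo)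
  apply ae_restrict_of_forall_mem measurableSet_Ioo
  intro s hs
  have hts := hmaps hs
  have hb1 : |mlf α lam (t - s)| ≤ lam * ME * (t - s) ^ (α - 1) :=
    mlf_abs_le hα2 hα1 hlam ht₀ hts
  have hb2 : |F s| ≤ BF := by rw [← Real.norm_eq_abs]; exact hBF s (hsub hs)
  have hBF0 : 0 ≤ BF := le_trans (abs_nonneg _) hb2
  have hp : (0:ℝ) < (t - s) ^ (α - 1) := Real.rpow_pos_of_pos hts.1 _
  rw [Real.norm_eq_abs, abs_mul, abs_mul, abs_of_pos (by positivity : (0:ℝ) < 1 / lam)]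
  calc 1 / lam * |mlf α lam (t - s)| * |F s|
      ≤ 1 / lam * (lam * ME * (t - s) ^ (α - 1)) * BF := by
        apply mul_le_mul ?_ hb2 (abs_nonneg _) (by positivity)
        exact mul_le_mul_of_nonneg_left hb1 (by positivity)
    _ = 1 / lam * (lam * ME) * BF * (t - s) ^ (α - 1) := by ring

/-- Uniqueness of continuous solutions on `[0,t₀]` of the Volterra–Riccati equation
`g(t) = ∫_0^t (1/λ) f^{α,λ}(t−s)(a + (ν²/2) g(s)²) ds`. -/
theorem volterra_riccati_unique (α lam ν a t₀ : ℝ) (hα : α ∈ Ioo (1/2 : ℝ) 1)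
    (hlam : 0 < lam) (hν : 0 < ν) (ht₀ : 0 < t₀)
    (g₁ g₂ : ℝ → ℝ) (h₁c : ContinuousOn g₁ (Icc 0 t₀)) (h₂c : ContinuousOn g₂ (Icc 0 t₀))
    (h₁ : ∀ t ∈ Icc (0:ℝ) t₀,
      g₁ t = ∫ s in (0:ℝ)..t, (1 / lam) * mlf α lam (t - s) * (a + ν ^ 2 / 2 * g₁ s ^ 2))
    (h₂ : ∀ t ∈ Icc (0:ℝ) t₀,
      g₂ t = ∫ s in (0:ℝ)..t, (1 / lam) * mlf α lam (t - s) * (a + ν ^ 2 / 2 * g₂ s ^ 2)) :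
    EqOn g₁ g₂ (Icc 0 t₀) := by
  obtain ⟨hα2, hα1⟩ := hα
  have hα0 : 0 < α := by linarith
  set ME : ℝ := ∑' n : ℕ, (lam * t₀ ^ α) ^ n / Real.Gamma (α * n + α) with hMEdef
  have hME0 : 0 ≤ ME := tsum_nonneg fun n =>
    div_nonneg (by positivity) (Real.Gamma_pos_of_pos (by positivity)).le
  -- bound on g₁, g₂
  obtain ⟨B₁, hB₁⟩ := isCompact_Icc.exists_bound_of_continuousOn h₁c
  obtain ⟨B₂, hB₂⟩ := isCompact_Icc.exists_bound_of_continuousOn h₂c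
  set B : ℝ := max B₁ B₂ with hBdef
  have hgB : ∀ s ∈ Icc (0:ℝ) t₀, |g₁ s| ≤ B ∧ |g₂ s| ≤ B := fun s hs =>
    ⟨le_trans (hB₁ s hs) (le_max_left _ _), le_trans (hB₂ s hs) (le_max_right _ _)⟩
  have hB0 : 0 ≤ B := le_trans (abs_nonneg _) (hgB 0 ⟨le_refl 0, ht₀.le⟩).1
  -- the contraction constant
  set C : ℝ := ME * (ν ^ 2 * B) with hCdef
  have hC0 : 0 ≤ C := by positivity
  -- the step size δ
  set δ : ℝ := min t₀ ((α / (2 * (C + 1))) ^ (α⁻¹)) with hδdef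
  have hδ0 : 0 < δ := lt_min ht₀ (Real.rpow_pos_of_pos (by positivity) _)
  have hδkey : C * δ ^ α / α ≤ 1 / 2 := by
    have h1 : δ ^ α ≤ α / (2 * (C + 1)) := by
      calc δ ^ α ≤ ((α / (2 * (C + 1))) ^ (α⁻¹)) ^ α :=
            Real.rpow_le_rpow hδ0.le (min_le_right _ _) hα0.le
        _ = α / (2 * (C + 1)) := Real.rpow_inv_rpow (by positivity) (ne_of_gt hα0)
    have h2 : C * δ ^ α ≤ C * (α / (2 * (C + 1))) := mul_le_mul_of_nonneg_left h1 hC0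
    have h3 : C * (α / (2 * (C + 1))) ≤ α / 2 := by
      rw [mul_div_assoc', div_le_div_iff₀ (by positivity) (by norm_num)]
      nlinarith
    rw [div_le_iff₀ hα0]
    linarith
  -- value at zero
  have hzero : g₁ 0 = g₂ 0 := by
    rw [h₁ 0 ⟨le_refl 0, ht₀.le⟩, h₂ 0 ⟨le_refl 0, ht₀.le⟩]
    simp [intervalIntegral.integral_same]
  -- continuity of the nonlinearities
  have hF₁ : ContinuousOn (fun s => a + ν ^ 2 / 2 * g₁ s ^ 2) (Icc 0 t₀) :=
    continuousOn_const.add (continuousOn_const.mul (h₁c.pow 2))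
  have hF₂ : ContinuousOn (fun s => a + ν ^ 2 / 2 * g₂ s ^ 2) (Icc 0 t₀) :=
    continuousOn_const.add (continuousOn_const.mul (h₂c.pow 2))
  have hint₁ : ∀ t ∈ Icc (0:ℝ) t₀, IntervalIntegrable
      (fun s => (1 / lam) * mlf α lam (t - s) * (a + ν ^ 2 / 2 * g₁ s ^ 2)) volume 0 t :=
    fun t ht => volterra_integrable hα2 hα1 hlam ht₀ hF₁ ht
  have hint₂ : ∀ t ∈ Icc (0:ℝ) t₀, IntervalIntegrable
      (fun s => (1 / lam) * mlf α lam (t - s) * (a + ν ^ 2 / 2 * g₂ s ^ 2)) volume 0 t :=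
    fun t ht => volterra_integrable hα2 hα1 hlam ht₀ hF₂ ht
  -- main induction
  have main : ∀ n : ℕ, ∀ t ∈ Icc (0:ℝ) t₀, t ≤ n * δ → g₁ t = g₂ t := by
    intro n
    induction n with
    | zero =>
      intro t ht htn
      simp only [Nat.cast_zero, zero_mul] at htn
      have : t = 0 := le_antisymm htn ht.1
      rw [this]; exact hzero
    | succ n ih =>
      intro t ht htn
      set b : ℝ := min ((n + 1 : ℕ) * δ) t₀ with hbdef
      have hb0 : 0 ≤ b := le_min (by positivity) ht₀.le
      have hbt₀ : b ≤ t₀ := min_le_right _ _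
      have hJsub : Icc (0:ℝ) b ⊆ Icc 0 t₀ := Icc_subset_Icc le_rfl hbt₀
      have hconth : ContinuousOn (fun s => |g₁ s - g₂ s|) (Icc 0 b) :=
        ((h₁c.mono hJsub).sub (h₂c.mono hJsub)).abs
      obtain ⟨m, hmJ, hmax⟩ := isCompact_Icc.exists_isMaxOn
        (nonempty_Icc.mpr hb0) hconth
      set Hm : ℝ := |g₁ m - g₂ m| with hHmdef
      have hHm0 : 0 ≤ Hm := abs_nonneg _
      have claim : ∀ u ∈ Icc (0:ℝ) b, |g₁ u - g₂ u| ≤ 1 / 2 * Hm := by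
        intro u hu
        have huI : u ∈ Icc (0:ℝ) t₀ := hJsub hu
        set c : ℝ := min ((n : ℕ) * δ) u with hcdef
        have hc0 : 0 ≤ c := le_min (by positivity) hu.1
        have hcu : c ≤ u := min_le_right _ _
        have hIH : ∀ s ∈ Icc (0:ℝ) c, g₁ s = g₂ s := by
          intro s hs
          refine ih s ⟨hs.1, le_trans hs.2 (hcu.trans huI.2)⟩ ?_
          exact le_trans hs.2 (le_trans (min_le_left _ _) le_rfl)
        -- the difference integrand
        set f : ℝ → ℝ := fun s => (1 / lam) * mlf α lam (u - s) * (a + ν ^ 2 / 2 * g₁ s ^ 2)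
          - (1 / lam) * mlf α lam (u - s) * (a + ν ^ 2 / 2 * g₂ s ^ 2) with hfdef
        have hfint : IntervalIntegrable f volume 0 u := (hint₁ u huI).sub (hint₂ u huI)
        have heq1 : g₁ u - g₂ u = ∫ s in (0:ℝ)..u, f s := by
          rw [h₁ u huI, h₂ u huI, ← intervalIntegral.integral_sub (hint₁ u huI) (hint₂ u huI)]
        have hf0c : IntervalIntegrable f volume 0 c :=
          hfint.mono_set (uIcc_subset_uIcc_iff_le.mpr (by
            constructor
            · rw [min_def]; split_ifs <;> simp [hu.1, hc0] <;> linarith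
            · rw [max_def]; split_ifs <;> simp [hcu, hu.1] <;> linarith))
        have hfcu : IntervalIntegrable f volume c u :=
          hfint.mono_set (uIcc_subset_uIcc_iff_le.mpr (by
            constructor
            · rw [min_def]; split_ifs <;> simp [hc0, hu.1] <;> linarith
            · rw [max_def]; split_ifs <;> simp [hcu, hu.1] <;> linarith))
        have heq2 : ∫ s in (0:ℝ)..u, f s = ∫ s in c..u, f s := by
          rw [← intervalIntegral.integral_add_adjacent_intervals hf0c hfcu]
          have hz : ∫ s in (0:ℝ)..c, f s = 0 := by
            rw [intervalIntegral.integral_congr (g := fun _ => (0:ℝ))]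
            · exact intervalIntegral.integral_zero
            · intro s hs
              rw [uIcc_of_le hc0] at hs
              have := hIH s hs
              simp only [hfdef, this]
              ring
          rw [hz, zero_add]
        -- the pointwise bound on [c, u]
        have hbound : ∀ s ∈ Set.uIoc c u, ‖f s‖ ≤ C * Hm * (u - s) ^ (α - 1) := by
          intro s hs
          rw [uIoc_of_le hcu] at hs
          have hs0 : 0 < s := lt_of_le_of_lt hc0 hs.1
          rcases eq_or_lt_of_le hs.2 with hsu | hsu
          · have h0 : mlf α lam (u - s) = 0 := by
              rw [hsu, sub_self, mlf, Real.zero_rpow (by linarith : α - 1 ≠ 0)]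
              ring
            have hrp : (u - s : ℝ) ^ (α - 1) = 0 := by
              rw [hsu, sub_self, Real.zero_rpow (by linarith : α - 1 ≠ 0)]
            simp only [hfdef, h0, hrp, mul_zero, zero_mul, sub_zero, mul_zero, sub_self]
            simp
          · -- s < u
            have hus : u - s ∈ Ioc (0:ℝ) t₀ := ⟨by linarith, by linarith [huI.2, hs0]⟩
            have hk : |mlf α lam (u - s)| ≤ lam * ME * (u - s) ^ (α - 1) :=
              mlf_abs_le hα2 hα1 hlam ht₀ hus
            have hsJ : s ∈ Icc (0:ℝ) b := ⟨hs0.le, le_trans hs.2 hu.2⟩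
            have hsI : s ∈ Icc (0:ℝ) t₀ := hJsub hsJ
            have hgs : |g₁ s - g₂ s| ≤ Hm := hmax hsJ
            have hsum2B : |g₁ s + g₂ s| ≤ 2 * B := by
              calc |g₁ s + g₂ s| ≤ |g₁ s| + |g₂ s| := abs_add_le _ _
                _ ≤ 2 * B := by have := hgB s hsI; linarith [this.1, this.2]
            have hFdiff : |(a + ν ^ 2 / 2 * g₁ s ^ 2) - (a + ν ^ 2 / 2 * g₂ s ^ 2)|
                ≤ ν ^ 2 * B * Hm := by
              have h1 : (a + ν ^ 2 / 2 * g₁ s ^ 2) - (a + ν ^ 2 / 2 * g₂ s ^ 2)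
                  = ν ^ 2 / 2 * ((g₁ s + g₂ s) * (g₁ s - g₂ s)) := by ring
              rw [h1, abs_mul, abs_mul, abs_of_pos (by positivity : (0:ℝ) < ν ^ 2 / 2)]
              calc ν ^ 2 / 2 * (|g₁ s + g₂ s| * |g₁ s - g₂ s|)
                  ≤ ν ^ 2 / 2 * ((2 * B) * Hm) := by
                    apply mul_le_mul_of_nonneg_left ?_ (by positivity)
                    exact mul_le_mul hsum2B hgs (abs_nonneg _) (by positivity)
                _ = ν ^ 2 * B * Hm := by ring
            have hrp0 : (0:ℝ) < (u - s) ^ (α - 1) := Real.rpow_pos_of_pos hus.1 _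
            have hfs : f s = (1 / lam) * mlf α lam (u - s)
                * ((a + ν ^ 2 / 2 * g₁ s ^ 2) - (a + ν ^ 2 / 2 * g₂ s ^ 2)) := by
              simp only [hfdef]; ring
            rw [hfs, Real.norm_eq_abs, abs_mul, abs_mul,
              abs_of_pos (by positivity : (0:ℝ) < 1 / lam)]
            calc 1 / lam * |mlf α lam (u - s)|
                  * |(a + ν ^ 2 / 2 * g₁ s ^ 2) - (a + ν ^ 2 / 2 * g₂ s ^ 2)|
                ≤ 1 / lam * (lam * ME * (u - s) ^ (α - 1)) * (ν ^ 2 * B * Hm) := by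
                  apply mul_le_mul ?_ hFdiff (abs_nonneg _) (by positivity)
                  exact mul_le_mul_of_nonneg_left hk (by positivity)
              _ = (ME * (ν ^ 2 * B)) * Hm * (u - s) ^ (α - 1) := by
                  field_simp
              _ = C * Hm * (u - s) ^ (α - 1) := by rw [hCdef]
        -- integrability of the dominating function on [c, u]
        have hdomint : IntervalIntegrable (fun s => C * Hm * (u - s) ^ (α - 1)) volume c u := by
          have h1 : IntervalIntegrable (fun s : ℝ => (u - s) ^ (α - 1)) volume (u - (u - c)) (u - 0) :=
            (intervalIntegral.intervalIntegrable_rpow' (by linarith)).comp_sub_left u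
          rw [sub_sub_cancel, sub_zero] at h1
          exact h1.const_mul _
        -- the integral of the dominating function
        have hval : ∫ s in c..u, (u - s) ^ (α - 1) = (u - c) ^ α / α := by
          rw [intervalIntegral.integral_comp_sub_left (fun x => x ^ (α - 1)) u, sub_self,
            integral_rpow (Or.inl (by linarith))]
          rw [Real.zero_rpow (by linarith : α - 1 + 1 ≠ 0)]
          norm_num
        have hbnd : ‖∫ s in c..u, f s‖ ≤ |∫ s in c..u, C * Hm * (u - s) ^ (α - 1)| := by
          apply intervalIntegral.norm_integral_le_abs_of_norm_le ?_ hdomint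
          exact ae_restrict_of_forall_mem measurableSet_uIoc hbound
        have hcomp : ∫ s in c..u, C * Hm * (u - s) ^ (α - 1) = C * Hm * ((u - c) ^ α / α) := by
          rw [intervalIntegral.integral_const_mul, hval]
        have huc : u - c ≤ δ := by
          rcases le_total ((n : ℕ) * δ : ℝ) u with h | h
          · have : c = (n : ℕ) * δ := min_eq_left h
            rw [this]
            have : u ≤ ((n:ℕ) + 1) * δ := le_trans hu.2 (by
              rw [hbdef]
              exact (min_le_left _ _).trans (by push_cast; linarith))
            push_cast at this ⊢
            linarith
          · have : c = u := min_eq_right h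
            rw [this]; linarith
        have hucα : (u - c) ^ α ≤ δ ^ α :=
          Real.rpow_le_rpow (by linarith) huc hα0.le
        calc |g₁ u - g₂ u| = ‖∫ s in c..u, f s‖ := by
              rw [heq1, heq2, Real.norm_eq_abs]
          _ ≤ |∫ s in c..u, C * Hm * (u - s) ^ (α - 1)| := hbnd
          _ = C * Hm * ((u - c) ^ α / α) := by
              rw [hcomp, abs_of_nonneg]
              have h := Real.rpow_nonneg (sub_nonneg.mpr hcu) α
              have : 0 ≤ (u - c) ^ α / α := div_nonneg h hα0.le
              exact mul_nonneg (mul_nonneg hC0 hHm0) this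
          _ ≤ C * Hm * (δ ^ α / α) := by
              apply mul_le_mul_of_nonneg_left ?_ (by positivity)
              exact div_le_div_of_nonneg_right hucα hα0.le
          _ = (C * δ ^ α / α) * Hm := by ring
          _ ≤ 1 / 2 * Hm := mul_le_mul_of_nonneg_right hδkey hHm0
      -- conclude h ≡ 0 on J
      have hm0 : Hm = 0 := by
        have := claim m hmJ
        rw [← hHmdef] at this
        linarith [hHm0]
      have htJ : t ∈ Icc (0:ℝ) b := ⟨ht.1, le_min htn ht.2⟩
      have h1 : |g₁ t - g₂ t| ≤ Hm := hmax htJ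
      rw [hm0] at h1
      have h2 : |g₁ t - g₂ t| = 0 := le_antisymm h1 (abs_nonneg _)
      have := abs_eq_zero.mp h2
      linarith [this]
  -- finish
  intro t ht
  obtain ⟨n, hn⟩ := exists_nat_ge (t₀ / δ)
  apply main n t ht
  rw [div_le_iff₀ hδ0] at hn
  calc t ≤ t₀ := ht.2
    _ ≤ n * δ := hn
end
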